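/- Isoperimetric dichotomy: Let B ⊂ ℝ^m be an open ball and J ⊂ B an open set with ℋ^{m−1}(∂J ∩ B) = 0. Then either |J ∩ B| = 0 or |B \ J| = 0. In particular, if J is nonempty and open, then |B \ J| = 0, and hence the closure of J contains B. -/

import Mathlib

open MeasureTheory Metric Set Filter
open scoped ENNReal Topology

namespace Stmt16Aux

/-- On Euclidean space, a set null for `μH[m]` is Lebesgue-null. -/
lemma vol_null {m : ℕ} {s : Set (EuclideanSpace ℝ (Fin m))}
    (h : μH[(m : ℝ)] s = 0) : volume s = 0 := by
  have hac : (volume : Measure (EuclideanSpace ℝ (Fin m))) ≪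
      μH[(Module.finrank ℝ (EuclideanSpace ℝ (Fin m)) : ℝ)] :=
    Measure.absolutelyContinuous_isAddHaarMeasure _ _
  apply hac
  rw [finrank_euclideanSpace_fin]
  exact h

lemma vol_cb {m : ℕ} (c : EuclideanSpace ℝ (Fin m)) {r : ℝ} (hr : 0 ≤ r) :
    volume (closedBall c r) = ENNReal.ofReal (r ^ m) *
      volume (ball (0 : EuclideanSpace ℝ (Fin m)) 1) := by
  rw [Measure.addHaar_closedBall volume c hr, finrank_euclideanSpace_fin]

set_option maxHeartbeats 1000000 in
/-- Core covering lemma: the cone from `q` over an `ℋ^{m-1}`-null set lying at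
distance at least `δ` (and at most `D`) from `q` is Lebesgue-null. -/
lemma cone_null {m : ℕ} (hm : 1 ≤ m) (q : EuclideanSpace ℝ (Fin m))
    {F : Set (EuclideanSpace ℝ (Fin m))} {δ D : ℝ} (hδ : 0 < δ)
    (hFδ : ∀ f ∈ F, δ ≤ dist f q) (hFD : ∀ f ∈ F, dist f q ≤ D)
    (h : μH[(m : ℝ) - 1] F = 0) :
    volume {x : EuclideanSpace ℝ (Fin m) |
      ∃ f ∈ F, ∃ τ : ℝ, 1 ≤ τ ∧ τ ≤ D / δ ∧ x = q + τ • (f - q)} = 0 := by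
  rcases F.eq_empty_or_nonempty with hF | hF
  · simp [hF]
  obtain ⟨f₀, hf₀⟩ := hF
  have hδD : δ ≤ D := le_trans (hFδ f₀ hf₀) (hFD f₀ hf₀)
  have hD : 0 < D := lt_of_lt_of_le hδ hδD
  set T : ℝ := D / δ with hTdef
  have hT1 : 1 ≤ T := (one_le_div hδ).mpr hδD
  -- the case `m = 1` is impossible for nonempty `F`
  rcases eq_or_lt_of_le hm with hm1 | hm2
  · exfalso
    have h0 : ((m : ℝ) - 1) = 0 := by rw [← hm1]; norm_num
    rw [h0] at h
    have h1 := Measure.one_le_hausdorffMeasure_zero_of_nonempty (s := F) ⟨f₀, hf₀⟩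
    rw [h] at h1
    simp at h1
  set k : ℕ := m - 1 with hk
  have hk1 : 1 ≤ k := Nat.le_sub_one_of_lt hm2
  have hmk : m = k + 1 := by omega
  have hkm : ((m : ℝ) - 1) = (k : ℝ) := by
    rw [hk]; push_cast [Nat.cast_sub hm]; ring
  rw [hkm] at h
  set V := volume (ball (0 : EuclideanSpace ℝ (Fin m)) 1) with hV
  have hVne : V ≠ ⊤ := measure_ball_lt_top.ne
  set A : ℝ≥0∞ := ENNReal.ofReal (((T - 1) * D + 4) * (T + 1) ^ m) * V with hA
  have hAne : A ≠ ⊤ := ENNReal.mul_ne_top ENNReal.ofReal_ne_top hVne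
  set Cone := {x : EuclideanSpace ℝ (Fin m) |
      ∃ f ∈ F, ∃ τ : ℝ, 1 ≤ τ ∧ τ ≤ T ∧ x = q + τ • (f - q)} with hCone
  -- extract the infimum characterization at scale 1
  rw [Measure.hausdorffMeasure_apply] at h
  have h1 : (⨅ (t : ℕ → Set (EuclideanSpace ℝ (Fin m))) (_ : F ⊆ ⋃ n, t n)
      (_ : ∀ n, EMetric.diam (t n) ≤ 1),
      ∑' n, ⨆ _ : (t n).Nonempty, EMetric.diam (t n) ^ (k : ℝ)) = 0 := by
    refine le_antisymm ?_ zero_le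
    rw [← h]
    exact le_iSup₂ (f := fun (r : ℝ≥0∞) (_ : 0 < r) =>
      ⨅ (t : ℕ → Set (EuclideanSpace ℝ (Fin m))) (_ : F ⊆ ⋃ n, t n)
        (_ : ∀ n, EMetric.diam (t n) ≤ r),
        ∑' n, ⨆ _ : (t n).Nonempty, EMetric.diam (t n) ^ (k : ℝ)) 1 one_pos
  have key : ∀ ε : ℝ, 0 < ε → ε ≤ 1 →
      volume Cone ≤ A * 2 ^ (m + 1) * ENNReal.ofReal ε := by
    intro ε hε hε1
    have h2 : (⨅ (t : ℕ → Set (EuclideanSpace ℝ (Fin m))) (_ : F ⊆ ⋃ n, t n)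
        (_ : ∀ n, EMetric.diam (t n) ≤ 1),
        ∑' n, ⨆ _ : (t n).Nonempty, EMetric.diam (t n) ^ (k : ℝ)) < ENNReal.ofReal ε := by
      rw [h1]; exact ENNReal.ofReal_pos.mpr hε
    simp only [iInf_lt_iff] at h2
    obtain ⟨t, htF, htd, hts⟩ := h2
    have htd' : ∀ n, EMetric.diam (t n) ≠ ⊤ :=
      fun n => ((htd n).trans_lt ENNReal.one_lt_top).ne
    set ρ : ℕ → ℝ := fun n => (EMetric.diam (t n)).toReal with hρ
    have hρ0 : ∀ n, 0 ≤ ρ n := fun n => ENNReal.toReal_nonneg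
    have hρ1 : ∀ n, ρ n ≤ 1 := fun n => by
      have := ENNReal.toReal_mono ENNReal.one_ne_top (htd n)
      simpa using this
    set e : ℕ → ℝ := fun n => ε / 2 / 2 ^ n with he
    have he0 : ∀ n, 0 < e n := fun n => by positivity
    have he1 : ∀ n, e n ≤ 1 := fun n => by
      have h2n : (1 : ℝ) ≤ 2 ^ n := one_le_pow₀ one_le_two
      rw [he]
      calc ε / 2 / 2 ^ n ≤ ε / 2 / 1 := by gcongr
        _ ≤ 1 := by linarith
    set σ : ℕ → ℝ := fun n => ρ n + e n with hσ
    have hσ0 : ∀ n, 0 < σ n := fun n => add_pos_of_nonneg_of_pos (hρ0 n) (he0 n)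
    have hσ2 : ∀ n, σ n ≤ 2 := fun n => by
      have := hρ1 n; have := he1 n; simp only [hσ]; linarith
    set Cn : ℕ → Set (EuclideanSpace ℝ (Fin m)) := fun n =>
      {x | ∃ f ∈ t n ∩ F, ∃ τ : ℝ, 1 ≤ τ ∧ τ ≤ T ∧ x = q + τ • (f - q)} with hCn
    have hsub : Cone ⊆ ⋃ n, Cn n := by
      rintro x ⟨f, hf, τ, hτ1, hτT, rfl⟩
      obtain ⟨n, hn⟩ := mem_iUnion.mp (htF hf)
      exact mem_iUnion.mpr ⟨n, f, ⟨hn, hf⟩, τ, hτ1, hτT, rfl⟩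
    have hCnb : ∀ n, volume (Cn n) ≤ A * ENNReal.ofReal (σ n ^ k) := by
      intro n
      rcases (t n ∩ F).eq_empty_or_nonempty with hemp | ⟨fn, hfn⟩
      · have : Cn n = ∅ := by
          rw [hCn]; ext x; simp [hemp]
        simp [this]
      · have hfnF : fn ∈ F := hfn.2
        have hfnt : fn ∈ t n := hfn.1
        have hfnD : dist fn q ≤ D := hFD fn hfnF
        set β : ℝ := σ n / D with hβdef
        have hβ : 0 < β := div_pos (hσ0 n) hD
        set K : ℕ := ⌈(T - 1) * D / σ n⌉₊ with hK
        have hbound : ∀ n', Bornology.IsBounded (t n') :=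
          fun n' => Metric.isBounded_iff_ediam_ne_top.mpr (htd' n')
        have hcov : Cn n ⊆ ⋃ j ∈ Finset.range (K + 1),
            closedBall (q + (1 + (j : ℝ) * β) • (fn - q)) ((T + 1) * σ n) := by
          rintro x ⟨f, hf, τ, hτ1, hτT, rfl⟩
          set j : ℕ := ⌊(τ - 1) / β⌋₊ with hj
          have hjK : j ≤ K := by
            have h1' : (τ - 1) / β ≤ (T - 1) * D / σ n := by
              rw [hβdef, div_div_eq_mul_div]
              apply (div_le_div_iff_of_pos_right (hσ0 n)).mpr
              nlinarith
            calc j ≤ ⌊(T - 1) * D / σ n⌋₊ := Nat.floor_le_floor h1'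
              _ ≤ K := Nat.floor_le_ceil _
          refine mem_biUnion (Finset.mem_range.mpr (Nat.lt_succ_of_le hjK)) ?_
          rw [mem_closedBall, dist_eq_norm]
          have hjβ1 : (j : ℝ) * β ≤ τ - 1 := by
            rw [← le_div_iff₀ hβ]
            exact Nat.floor_le (div_nonneg (by linarith) hβ.le)
          have hjβ2 : τ - 1 < ((j : ℝ) + 1) * β := by
            rw [← div_lt_iff₀ hβ]
            exact Nat.lt_floor_add_one _
          have hxval : (q + τ • (f - q)) - (q + (1 + (j : ℝ) * β) • (fn - q))
              = τ • (f - fn) + (τ - (1 + (j : ℝ) * β)) • (fn - q) := by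
            module
          rw [hxval]
          have hffn : dist f fn ≤ ρ n :=
            Metric.dist_le_diam_of_mem (hbound n) hf.1 hfnt
          have h1' : ‖τ • (f - fn)‖ ≤ T * ρ n := by
            rw [norm_smul, Real.norm_eq_abs, abs_of_pos (by linarith : (0:ℝ) < τ)]
            have hnn : ‖f - fn‖ ≤ ρ n := by rwa [← dist_eq_norm]
            exact mul_le_mul hτT hnn (norm_nonneg _) (by linarith)
          have h2' : ‖(τ - (1 + (j : ℝ) * β)) • (fn - q)‖ ≤ σ n := by
            rw [norm_smul, Real.norm_eq_abs,
              abs_of_nonneg (by linarith : (0:ℝ) ≤ τ - (1 + (j : ℝ) * β))]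
            have hfq : ‖fn - q‖ ≤ D := by rwa [← dist_eq_norm]
            have hτβ : τ - (1 + (j : ℝ) * β) ≤ β := by nlinarith
            calc (τ - (1 + (j : ℝ) * β)) * ‖fn - q‖ ≤ β * D := by
                  apply mul_le_mul hτβ hfq (norm_nonneg _) hβ.le
              _ = σ n := by rw [hβdef]; field_simp
          calc ‖τ • (f - fn) + (τ - (1 + (j : ℝ) * β)) • (fn - q)‖
              ≤ ‖τ • (f - fn)‖ + ‖(τ - (1 + (j : ℝ) * β)) • (fn - q)‖ := norm_add_le _ _
            _ ≤ T * ρ n + σ n := add_le_add h1' h2'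
            _ ≤ (T + 1) * σ n := by
                have : ρ n ≤ σ n := by simp only [hσ]; linarith [he0 n]
                nlinarith [hσ0 n, (by linarith : (0:ℝ) < T)]
        have hr : (0:ℝ) ≤ (T + 1) * σ n := by positivity
        have hreal : ((K : ℝ) + 1) * ((T + 1) * σ n) ^ m
            ≤ ((T - 1) * D + 4) * (T + 1) ^ m * σ n ^ k := by
          have hK1 : (K : ℝ) + 1 ≤ ((T - 1) * D + 4) / σ n := by
            have hc : (K : ℝ) < (T - 1) * D / σ n + 1 :=
              Nat.ceil_lt_add_one (div_nonneg (by nlinarith) (hσ0 n).le)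
            rw [le_div_iff₀ (hσ0 n)]
            have hc2 : (K : ℝ) * σ n < (T - 1) * D + σ n := by
              have h := mul_lt_mul_of_pos_right hc (hσ0 n)
              rwa [add_mul, one_mul, div_mul_cancel₀ _ (hσ0 n).ne'] at h
            nlinarith [hσ2 n, hσ0 n]
          have hpow : ((T + 1) * σ n) ^ m = (T + 1) ^ m * (σ n ^ k * σ n) := by
            rw [mul_pow, hmk, pow_succ (σ n) k]
          rw [hpow]
          calc ((K : ℝ) + 1) * ((T + 1) ^ m * (σ n ^ k * σ n))
              ≤ (((T - 1) * D + 4) / σ n) * ((T + 1) ^ m * (σ n ^ k * σ n)) := by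
                apply mul_le_mul_of_nonneg_right hK1 (by positivity)
            _ = ((T - 1) * D + 4) * (T + 1) ^ m * σ n ^ k := by
                rw [div_mul_eq_mul_div, div_eq_iff (hσ0 n).ne']; ring
        calc volume (Cn n)
            ≤ volume (⋃ j ∈ Finset.range (K + 1),
              closedBall (q + (1 + (j : ℝ) * β) • (fn - q)) ((T + 1) * σ n)) :=
              measure_mono hcov
          _ ≤ ∑ j ∈ Finset.range (K + 1),
              volume (closedBall (q + (1 + (j : ℝ) * β) • (fn - q)) ((T + 1) * σ n)) :=
              measure_biUnion_finset_le _ _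
          _ = (K + 1) * (ENNReal.ofReal (((T + 1) * σ n) ^ m) * V) := by
              simp only [vol_cb _ hr, ← hV, Finset.sum_const, Finset.card_range,
                nsmul_eq_mul, Nat.cast_add, Nat.cast_one]
          _ ≤ A * ENNReal.ofReal (σ n ^ k) := by
              have hXle : ((K : ℝ≥0∞) + 1) * ENNReal.ofReal (((T + 1) * σ n) ^ m)
                  ≤ ENNReal.ofReal (((T - 1) * D + 4) * (T + 1) ^ m)
                    * ENNReal.ofReal (σ n ^ k) := by
                have hcast : ((K : ℝ≥0∞) + 1) = ENNReal.ofReal ((K : ℝ) + 1) := by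
                  rw [ENNReal.ofReal_add (by positivity) zero_le_one,
                    ENNReal.ofReal_natCast, ENNReal.ofReal_one]
                rw [hcast, ← ENNReal.ofReal_mul (by positivity : (0:ℝ) ≤ (K:ℝ) + 1),
                  ← ENNReal.ofReal_mul (mul_nonneg (by nlinarith) (by positivity) : (0:ℝ) ≤ ((T - 1) * D + 4) * (T + 1) ^ m)]
                exact ENNReal.ofReal_le_ofReal hreal
              calc ((K : ℝ≥0∞) + 1) * (ENNReal.ofReal (((T + 1) * σ n) ^ m) * V)
                  = (((K : ℝ≥0∞) + 1) * ENNReal.ofReal (((T + 1) * σ n) ^ m)) * V := by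
                    ring
                _ ≤ (ENNReal.ofReal (((T - 1) * D + 4) * (T + 1) ^ m)
                      * ENNReal.ofReal (σ n ^ k)) * V := mul_le_mul_left hXle V
                _ = A * ENNReal.ofReal (σ n ^ k) := by rw [hA]; ring
    -- now sum up
    have hsum1 : ∑' n, ENNReal.ofReal (ρ n ^ k) < ENNReal.ofReal ε := by
      refine lt_of_le_of_lt (ENNReal.tsum_le_tsum fun n => ?_) hts
      rcases (t n).eq_empty_or_nonempty with hne | hne
      · simp [hρ, hne, Metric.ediam_empty, zero_pow (by omega : k ≠ 0), (by omega : k ≠ 0)]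
        exact ⟨le_of_eq ((ENNReal.toReal_eq_zero_iff _).mpr (Or.inl Metric.ediam_empty)), by omega⟩
      · rw [iSup_pos hne, ENNReal.rpow_natCast]
        simp only [hρ]
        rw [ENNReal.ofReal_pow ENNReal.toReal_nonneg, ENNReal.ofReal_toReal (htd' n)]
    have hsum2 : ∑' n, ENNReal.ofReal (e n) = ENNReal.ofReal ε := by
      rw [← ENNReal.ofReal_tsum_of_nonneg (fun n => (he0 n).le)]
      · rw [he]; norm_num [tsum_geometric_two' ε]
      · have : Summable (fun n : ℕ => ε / 2 * (1 / 2) ^ n) :=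
          (summable_geometric_two).mul_left (ε / 2)
        refine this.congr fun n => ?_
        rw [he]
        field_simp
        rw [← mul_pow]; norm_num
    have hσk : ∀ n, ENNReal.ofReal (σ n ^ k)
        ≤ 2 ^ k * (ENNReal.ofReal (ρ n ^ k) + ENNReal.ofReal (e n)) := by
      intro n
      have hr1 : σ n ^ k ≤ 2 ^ k * (ρ n ^ k + e n) := by
        have hmax : σ n ≤ 2 * max (ρ n) (e n) := by
          rcases le_total (ρ n) (e n) with hle | hle
          · rw [max_eq_right hle]; simp only [hσ]; linarith
          · rw [max_eq_left hle]; simp only [hσ]; linarith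
        have h1' : σ n ^ k ≤ (2 * max (ρ n) (e n)) ^ k :=
          pow_le_pow_left₀ (hσ0 n).le hmax k
        have h2' : (max (ρ n) (e n)) ^ k ≤ ρ n ^ k + e n ^ k := by
          rcases le_total (ρ n) (e n) with hle | hle
          · rw [max_eq_right hle]
            nlinarith [pow_nonneg (hρ0 n) k]
          · rw [max_eq_left hle]
            nlinarith [pow_nonneg (he0 n).le k]
        have h3' : e n ^ k ≤ e n := pow_le_of_le_one (he0 n).le (he1 n) (by omega)
        have h2k : (0:ℝ) ≤ 2 ^ k := by positivity
        calc σ n ^ k ≤ (2 * max (ρ n) (e n)) ^ k := h1'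
          _ = 2 ^ k * (max (ρ n) (e n)) ^ k := by rw [mul_pow]
          _ ≤ 2 ^ k * (ρ n ^ k + e n ^ k) := mul_le_mul_of_nonneg_left h2' h2k
          _ ≤ 2 ^ k * (ρ n ^ k + e n) := by
              have := mul_le_mul_of_nonneg_left h3' h2k
              nlinarith
      calc ENNReal.ofReal (σ n ^ k) ≤ ENNReal.ofReal (2 ^ k * (ρ n ^ k + e n)) :=
            ENNReal.ofReal_le_ofReal hr1
        _ = 2 ^ k * (ENNReal.ofReal (ρ n ^ k) + ENNReal.ofReal (e n)) := by
            have hp1 : (0:ℝ) ≤ 2 ^ k := by positivity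
            have hp2 : (0:ℝ) ≤ ρ n ^ k := by positivity
            rw [ENNReal.ofReal_mul hp1, ENNReal.ofReal_add hp2 (he0 n).le,
              ENNReal.ofReal_pow (by norm_num : (0:ℝ) ≤ 2)]
            norm_num
    calc volume Cone ≤ volume (⋃ n, Cn n) := measure_mono hsub
      _ ≤ ∑' n, volume (Cn n) := measure_iUnion_le _
      _ ≤ ∑' n, A * ENNReal.ofReal (σ n ^ k) := ENNReal.tsum_le_tsum hCnb
      _ = A * ∑' n, ENNReal.ofReal (σ n ^ k) := by rw [ENNReal.tsum_mul_left]
      _ ≤ A * ∑' n, 2 ^ k * (ENNReal.ofReal (ρ n ^ k) + ENNReal.ofReal (e n)) := by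
          gcongr with n
          exact hσk n
      _ = A * (2 ^ k * (∑' n, ENNReal.ofReal (ρ n ^ k) + ∑' n, ENNReal.ofReal (e n))) := by
          rw [ENNReal.tsum_mul_left, ENNReal.tsum_add]
      _ ≤ A * (2 ^ k * (ENNReal.ofReal ε + ENNReal.ofReal ε)) := by
          gcongr <;> first | exact hsum1.le | exact hsum2.le
      _ = A * 2 ^ (k + 1) * ENNReal.ofReal ε := by
          rw [pow_succ]
          ring
      _ ≤ A * 2 ^ (m + 1) * ENNReal.ofReal ε := by
          gcongr
          · exact one_le_two
          · omega
  -- conclude by letting ε → 0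
  have hAne2 : A * 2 ^ (m + 1) ≠ ⊤ :=
    ENNReal.mul_ne_top hAne (ENNReal.pow_ne_top ENNReal.ofNat_ne_top)
  refine le_antisymm ?_ zero_le
  have htend : Tendsto (fun n : ℕ => A * 2 ^ (m + 1) * ENNReal.ofReal (1 / (n + 1)))
      atTop (𝓝 0) := by
    have h1' : Tendsto (fun n : ℕ => ENNReal.ofReal (1 / (n + 1))) atTop (𝓝 0) := by
      have := tendsto_one_div_add_atTop_nhds_zero_nat (𝕜 := ℝ)
      have := (ENNReal.continuous_ofReal.tendsto 0).comp this
      simpa [Function.comp_def] using this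
    have := ENNReal.Tendsto.const_mul h1' (Or.inr hAne2)
    simpa using this
  refine ge_of_tendsto' htend fun n => ?_
  exact key (1 / (n + 1)) (by positivity) (by
    rw [div_le_one (by positivity)]
    have : (0:ℝ) ≤ (n : ℝ) := Nat.cast_nonneg n
    linarith)

end Stmt16Aux

open Stmt16Aux

/-- isoperimetric dichotomy.  If J is an open subset of a ball
B ⊂ ℝ^m with ℋ^{m−1}(∂J ∩ B) = 0, then either |J| = 0 or |B \ J| = 0; in
particular if J is nonempty then |B \ J| = 0 and B ⊆ closure J. -/
theorem stmt_16 (m : ℕ) (hm : 1 ≤ m)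
    (x₀ : EuclideanSpace ℝ (Fin m)) (R : ℝ) (hR : 0 < R)
    (J : Set (EuclideanSpace ℝ (Fin m)))
    (hJo : IsOpen J) (hJB : J ⊆ Metric.ball x₀ R)
    (hfr : μH[(m : ℝ) - 1] (frontier J ∩ Metric.ball x₀ R) = 0) :
    (volume J = 0 ∨ volume (Metric.ball x₀ R \ J) = 0) ∧
    (J.Nonempty → volume (Metric.ball x₀ R \ J) = 0 ∧ Metric.ball x₀ R ⊆ closure J) := by
  set B := Metric.ball x₀ R with hB
  set F := frontier J ∩ B with hF
  -- the frontier piece is Lebesgue null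
  have hFvol : volume F = 0 := by
    apply vol_null
    refine le_antisymm ?_ zero_le
    calc μH[(m : ℝ)] F ≤ μH[(m : ℝ) - 1] F :=
        Measure.hausdorffMeasure_mono (by linarith) F
      _ = 0 := hfr
  -- main claim: if J is nonempty then B ⊆ closure J
  have hmain : J.Nonempty → B ⊆ closure J := by
    rintro ⟨p, hp⟩
    by_contra hns
    obtain ⟨q, hqB, hqJ⟩ := not_subset.mp hns
    have hclne : (closure J).Nonempty := ⟨p, subset_closure hp⟩
    set δ := infDist q (closure J) with hδdef
    have hδ : 0 < δ := (isClosed_closure.notMem_iff_infDist_pos hclne).mp hqJ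
    obtain ⟨r, hr0, hrJ⟩ := Metric.isOpen_iff.mp hJo p hp
    set D := dist p q + r with hD
    have hD0 : 0 < D := by
      have := dist_nonneg (x := p) (y := q); simp only [hD]; linarith
    set F' := F ∩ closedBall q D with hF'
    have hF'δ : ∀ f ∈ F', δ ≤ dist f q := by
      rintro f ⟨⟨hf1, _⟩, _⟩
      rw [dist_comm]
      exact infDist_le_dist_of_mem (frontier_subset_closure hf1)
    have hF'D : ∀ f ∈ F', dist f q ≤ D := fun f hf => mem_closedBall.mp hf.2
    have hF'H : μH[(m : ℝ) - 1] F' = 0 :=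
      measure_mono_null inter_subset_left hfr
    have hcone := cone_null hm q hδ hF'δ hF'D hF'H
    -- find a point of `ball p r` off the cone
    have hballpos : 0 < volume (ball p r) := measure_ball_pos volume p hr0
    have hnsub : ¬ (ball p r ⊆ {x : EuclideanSpace ℝ (Fin m) |
        ∃ f ∈ F', ∃ τ : ℝ, 1 ≤ τ ∧ τ ≤ D / δ ∧ x = q + τ • (f - q)}) := by
      intro hsub
      exact absurd (measure_mono_null hsub hcone) hballpos.ne'
    obtain ⟨x, hxball, hxC⟩ := not_subset.mp hnsub
    have hxJ : x ∈ J := hrJ hxball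
    have hxB : x ∈ B := hJB hxJ
    -- the segment from q to x
    set γ : ℝ → EuclideanSpace ℝ (Fin m) := fun s => q + s • (x - q) with hγdef
    have hγ : Continuous γ := by
      apply continuous_const.add
      exact continuous_id.smul continuous_const
    set A : Set ℝ := {s | s ∈ Icc (0:ℝ) 1 ∧ γ s ∈ J} with hAdef
    have h1A : (1:ℝ) ∈ A := by
      refine ⟨⟨zero_le_one, le_rfl⟩, ?_⟩
      simp only [hγdef, one_smul]
      rwa [add_sub_cancel]
    have hAne : A.Nonempty := ⟨1, h1A⟩
    have hAbdd : BddBelow A := ⟨0, fun s hs => hs.1.1⟩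
    set s₀ := sInf A with hs₀def
    have hs₀0 : 0 ≤ s₀ := le_csInf hAne fun s hs => hs.1.1
    have hs₀1 : s₀ ≤ 1 := csInf_le hAbdd h1A
    have hγ0 : γ 0 = q := by simp [hγdef]
    have hclA : γ s₀ ∈ closure J := by
      have h1 : s₀ ∈ closure A := csInf_mem_closure hAne hAbdd
      have h2 : γ s₀ ∈ γ '' closure A := mem_image_of_mem _ h1
      have h3 := image_closure_subset_closure_image (s := A) hγ
      have h4 : γ '' A ⊆ J := by rintro _ ⟨s, hs, rfl⟩; exact hs.2
      exact closure_mono h4 (h3 h2)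
    have hs₀pos : 0 < s₀ := by
      rcases eq_or_lt_of_le hs₀0 with heq | hlt
      · exfalso; apply hqJ; rw [← hγ0, heq]; exact hclA
      · exact hlt
    have hγB : γ s₀ ∈ B := by
      have hmem := (convex_ball x₀ R) hqB hxB (by linarith : (0:ℝ) ≤ 1 - s₀)
        hs₀0 (by ring)
      have : γ s₀ = (1 - s₀) • q + s₀ • x := by
        simp only [hγdef, smul_sub, sub_smul, one_smul]
        abel
      rw [this]
      exact hmem
    by_cases hsJ : γ s₀ ∈ J
    · -- contradicts the infimum property
      obtain ⟨η, hη, hηJ⟩ := Metric.isOpen_iff.mp (hJo.preimage hγ) s₀ hsJ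
      set s₁ := max 0 (s₀ - η / 2) with hs₁def
      have hs₁lt : s₁ < s₀ := by
        apply max_lt hs₀pos
        linarith
      have hs₁A : s₁ ∈ A := by
        refine ⟨⟨le_max_left _ _, ?_⟩, ?_⟩
        · apply max_le (by norm_num); linarith
        · apply hηJ
          rw [mem_ball, Real.dist_eq, abs_of_nonpos (by linarith)]
          have : s₀ - η / 2 ≤ s₁ := le_max_right _ _
          linarith
      exact absurd (csInf_le hAbdd hs₁A) (not_le.mpr hs₁lt)
    · -- γ s₀ lies on the frontier, so x is in the cone: contradiction
      exfalso
      apply hxC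
      have hγdist : dist (γ s₀) q = s₀ * dist x q := by
        simp only [hγdef]
        rw [dist_eq_norm, add_sub_cancel_left, norm_smul, Real.norm_eq_abs,
          abs_of_pos hs₀pos, dist_eq_norm]
      have hxqD : dist x q ≤ D := by
        have h1 : dist x q ≤ dist x p + dist p q := dist_triangle _ _ _
        have h2 : dist x p < r := mem_ball.mp hxball
        rw [hD]; linarith
      have hfr₀ : γ s₀ ∈ F' := by
        refine ⟨⟨?_, hγB⟩, ?_⟩
        · rw [hJo.frontier_eq]
          exact ⟨hclA, hsJ⟩
        · rw [mem_closedBall, hγdist]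
          nlinarith [dist_nonneg (x := x) (y := q)]
      have hδle : δ ≤ s₀ * dist x q := by rw [← hγdist]; exact hF'δ _ hfr₀
      refine ⟨γ s₀, hfr₀, 1 / s₀, ?_, ?_, ?_⟩
      · rw [le_div_iff₀ hs₀pos]; linarith
      · rw [div_le_div_iff₀ hs₀pos hδ]
        nlinarith
      · have hsub : γ s₀ - q = s₀ • (x - q) := by
          simp only [hγdef]; rw [add_sub_cancel_left]
        rw [hsub, smul_smul, one_div_mul_cancel hs₀pos.ne', one_smul]
        rw [add_sub_cancel]
  -- assemble the conclusions
  have hvol : J.Nonempty → volume (B \ J) = 0 := by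
    intro hJne
    refine measure_mono_null ?_ hFvol
    rintro y ⟨hyB, hyJ⟩
    refine ⟨?_, hyB⟩
    rw [hJo.frontier_eq]
    exact ⟨hmain hJne hyB, hyJ⟩
  constructor
  · rcases J.eq_empty_or_nonempty with hJe | hJne
    · left; simp [hJe]
    · right; exact hvol hJne
  · intro hJne
    exact ⟨hvol hJne, hmain hJne⟩
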